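/- Let Δ, Δ̃, V be positive linear maps on (between) Hilbert spaces with V*V ≤ I and V*ΔV ≤ Δ̃. Then for any s ≥ 0 and any vector h: ⟨h, (s+Δ)^{-1}h⟩ − ⟨h, V(s+Δ̃)^{-1}V*h⟩ ≥ ⟨h_s, (s+Δ)h_s⟩, where h_s = (s+Δ)^{-1}h − V(s+Δ̃)^{-1}V*h. -/

import Mathlib

open ContinuousLinearMap in
lemma smul_isPositive' {E : Type*} [NormedAddCommGroup E] [InnerProductSpace ℂ E]
    [CompleteSpace E] {T : E →L[ℂ] E} (hT : T.IsPositive) {s : ℝ} (hs : 0 ≤ s) :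
    ((s : ℂ) • T).IsPositive := by
  exact hT.smul_of_nonneg (Complex.zero_le_real.mpr hs)

theorem stmt4 {H₁ H₂ : Type*}
    [NormedAddCommGroup H₁] [InnerProductSpace ℂ H₁] [FiniteDimensional ℂ H₁]
    [NormedAddCommGroup H₂] [InnerProductSpace ℂ H₂] [FiniteDimensional ℂ H₂]
    (Δ : H₁ →L[ℂ] H₁) (Δt : H₂ →L[ℂ] H₂) (V : H₂ →L[ℂ] H₁)
    (hΔ : Δ.IsPositive) (hΔt : Δt.IsPositive)
    (hVV : ((1 : H₂ →L[ℂ] H₂) - (ContinuousLinearMap.adjoint V).comp V).IsPositive)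
    (hVΔV : (Δt - (ContinuousLinearMap.adjoint V).comp (Δ.comp V)).IsPositive)
    (s : ℝ) (hs : 0 ≤ s)
    (R : H₁ →L[ℂ] H₁)
    (hR : ((s : ℂ) • (1 : H₁ →L[ℂ] H₁) + Δ).comp R = 1)
    (hR' : R.comp ((s : ℂ) • (1 : H₁ →L[ℂ] H₁) + Δ) = 1)
    (Rt : H₂ →L[ℂ] H₂)
    (hRt : ((s : ℂ) • (1 : H₂ →L[ℂ] H₂) + Δt).comp Rt = 1)
    (hRt' : Rt.comp ((s : ℂ) • (1 : H₂ →L[ℂ] H₂) + Δt) = 1)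
    (h : H₁) :
    (inner ℂ ((R h - V (Rt (ContinuousLinearMap.adjoint V h)))) 
        (((s : ℂ) • (1 : H₁ →L[ℂ] H₁) + Δ)
          (R h - V (Rt (ContinuousLinearMap.adjoint V h)))) : ℂ).re
      ≤ (inner ℂ h (R h) : ℂ).re - (inner ℂ h (V (Rt (ContinuousLinearMap.adjoint V h))) : ℂ).re := by
  set A : H₁ →L[ℂ] H₁ := (s : ℂ) • 1 + Δ with hAdef
  set At : H₂ →L[ℂ] H₂ := (s : ℂ) • 1 + Δt with hAtdef
  set g : H₂ := ContinuousLinearMap.adjoint V h with hgdef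
  set u : H₂ := Rt g with hudef
  set x : H₁ := R h with hxdef
  set y : H₁ := V u with hydef
  have hAx : A x = h := by
    rw [hxdef, ← ContinuousLinearMap.comp_apply, hR, ContinuousLinearMap.one_apply]
  have hAtu : At u = g := by
    rw [hudef, ← ContinuousLinearMap.comp_apply, hRt, ContinuousLinearMap.one_apply]
  have hApos : A.IsPositive := by
    rw [hAdef]
    exact (smul_isPositive' ContinuousLinearMap.isPositive_one hs).add hΔ
  have hsymA : ∀ v w : H₁, (inner ℂ (A v) w : ℂ) = inner ℂ v (A w) :=
    fun v w => (ContinuousLinearMap.isSelfAdjoint_iff_isSymmetric.mp hApos.isSelfAdjoint) v w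
  -- expansion
  have h2 : (inner ℂ x (A y) : ℂ) = inner ℂ h y := by rw [← hsymA, hAx]
  have hexp : (inner ℂ (x - y) (A (x - y)) : ℂ)
      = inner ℂ x h - inner ℂ h y - inner ℂ y h + inner ℂ y (A y) := by
    rw [map_sub, inner_sub_left, inner_sub_right, inner_sub_right, hAx, h2]
    ring
  -- key positivity
  have hPeq : At - (ContinuousLinearMap.adjoint V).comp (A.comp V)
      = (s : ℂ) • ((1 : H₂ →L[ℂ] H₂) - (ContinuousLinearMap.adjoint V).comp V)
        + (Δt - (ContinuousLinearMap.adjoint V).comp (Δ.comp V)) := by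
    simp only [hAdef, hAtdef, ContinuousLinearMap.add_comp, ContinuousLinearMap.smul_comp,
      ContinuousLinearMap.one_def, ContinuousLinearMap.id_comp,
      ContinuousLinearMap.comp_add, ContinuousLinearMap.comp_smulₛₗ, RingHom.id_apply,
      smul_sub]
    abel
  have hP : (At - (ContinuousLinearMap.adjoint V).comp (A.comp V)).IsPositive := by
    rw [hPeq]; exact (smul_isPositive' hVV hs).add hVΔV
  have hkey0 : 0 ≤ (inner ℂ ((At - (ContinuousLinearMap.adjoint V).comp (A.comp V)) u) u : ℂ).re :=
    (Complex.le_def.mp (hP.inner_nonneg_left u)).1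
  have hexp2 : (inner ℂ ((At - (ContinuousLinearMap.adjoint V).comp (A.comp V)) u) u : ℂ)
      = inner ℂ g u - inner ℂ (A y) y := by
    rw [ContinuousLinearMap.sub_apply, inner_sub_left, hAtu, ContinuousLinearMap.comp_apply,
      ContinuousLinearMap.comp_apply]
    simp [ContinuousLinearMap.adjoint_inner_left, hydef]
  have hkey : (inner ℂ (A y) y : ℂ).re ≤ (inner ℂ g u : ℂ).re := by
    rw [hexp2, Complex.sub_re] at hkey0; linarith
  have hgy : (inner ℂ g u : ℂ) = inner ℂ h y := by
    rw [hgdef, hydef]; exact ContinuousLinearMap.adjoint_inner_left V u h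
  have ra : (inner ℂ y (A y) : ℂ).re = (inner ℂ (A y) y : ℂ).re := by
    rw [← inner_conj_symm y (A y), Complex.conj_re]
  have rc : (inner ℂ x h : ℂ).re = (inner ℂ h x : ℂ).re := by
    rw [← inner_conj_symm x h, Complex.conj_re]
  have rd : (inner ℂ y h : ℂ).re = (inner ℂ h y : ℂ).re := by
    rw [← inner_conj_symm y h, Complex.conj_re]
  rw [hexp]
  rw [hgy] at hkey
  simp only [Complex.add_re, Complex.sub_re]
  linarith
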